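/- Let U be an ultrafilter on ℕ, let ν : ℕ → ℕ with ν_n ≥ 1, and set X_n = Fin (ν_n). Let ξ_n : X_n → ℂ be functions with sup_n ‖ξ_n‖ < ∞, and let γ⁰ : ℕ → ℕ with γ⁰_n ≥ 1. Assume: for every γ : ℕ → ℕ such that γ_n/γ⁰_n → ∞ along U and for every ε > 0, there exist k ∈ ℕ and functions ζ_n : X_n → ℂ such that |supp ζ_n| ≤ k·γ_n for all n and {n : ‖ξ_n − ζ_n‖ < ε} ∈ U. Then for every ε > 0 there exist C ∈ ℕ and functions η_n : X_n → ℂ such that |supp η_n| ≤ C·γ⁰_n for all n and {n : ‖ξ_n − η_n‖ < ε} ∈ U. -/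

import Mathlib

open Filter

/-- If a bounded sequence ξ_n ∈ l²(Fin (ν n)) can be ε-approximated
(along U) by vectors supported on k·γ_n points for every γ with γ_n/γ0_n → ∞
along U, then it can be ε-approximated (along U) by vectors supported on
C·γ0_n points. -/
theorem stmt_4 (U : Ultrafilter ℕ) (ν : ℕ → ℕ) (hν : ∀ n, 1 ≤ ν n)
    (ξ : ∀ n, Fin (ν n) → ℂ)
    (hbdd : ∃ B : ℝ, ∀ n, Real.sqrt (∑ x, ‖ξ n x‖ ^ 2) ≤ B)
    (γ0 : ℕ → ℕ) (hγ0 : ∀ n, 1 ≤ γ0 n)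
    (h : ∀ γ : ℕ → ℕ,
      Tendsto (fun n => (γ n : ℝ) / (γ0 n : ℝ)) (U : Filter ℕ) atTop →
      ∀ ε : ℝ, 0 < ε →
        ∃ (k : ℕ) (ζ : ∀ n, Fin (ν n) → ℂ),
          (∀ n, (Function.support (ζ n)).ncard ≤ k * γ n) ∧
          {n : ℕ | Real.sqrt (∑ x, ‖ξ n x - ζ n x‖ ^ 2) < ε} ∈ U) :
    ∀ ε : ℝ, 0 < ε →
      ∃ (C : ℕ) (η : ∀ n, Fin (ν n) → ℂ),
        (∀ n, (Function.support (η n)).ncard ≤ C * γ0 n) ∧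
        {n : ℕ | Real.sqrt (∑ x, ‖ξ n x - η n x‖ ^ 2) < ε} ∈ U := by
  classical
  intro ε hε
  -- S C : the set of n where ξ_n can be ε-approximated by a (C·γ0 n)-supported vector
  set S : ℕ → Set ℕ := fun C => {n : ℕ | ∃ η : Fin (ν n) → ℂ,
      (Function.support η).ncard ≤ C * γ0 n ∧
      Real.sqrt (∑ x, ‖ξ n x - η x‖ ^ 2) < ε} with hSdef
  by_cases hS : ∃ C : ℕ, S C ∈ U
  · obtain ⟨C, hC⟩ := hS
    refine ⟨C, fun n => if hn : n ∈ S C then hn.choose else 0, fun n => ?_, ?_⟩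
    · by_cases hn : n ∈ S C
      · simp only [dif_pos hn]; exact hn.choose_spec.1
      · simp [dif_neg hn]
    · filter_upwards [hC] with n hn
      simp only [Set.mem_setOf_eq, dif_pos hn]
      exact hn.choose_spec.2
  · push_neg at hS
    -- the complements are all in U
    have hT : ∀ C, (S C)ᶜ ∈ U := fun C => (Ultrafilter.compl_mem_iff_notMem).2 (hS C)
    -- ξ n itself witnesses n ∈ S (ν n)
    have hSν : ∀ n, n ∈ S (ν n) := by
      intro n
      refine ⟨ξ n, ?_, ?_⟩
      · calc (Function.support (ξ n)).ncard ≤ (Set.univ : Set (Fin (ν n))).ncard :=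
              Set.ncard_le_ncard (Set.subset_univ _) Set.finite_univ
          _ = ν n := by simp [Set.ncard_univ]
          _ ≤ ν n * γ0 n := Nat.le_mul_of_pos_right _ (hγ0 n)
      · simpa using hε
    -- m n : the largest C with n ∈ (S C)ᶜ ; it is < ν n
    set m : ℕ → ℕ := fun n => Nat.findGreatest (fun C => n ∈ (S C)ᶜ) (ν n) with hmdef
    -- S is monotone in C, i.e. complements are antitone
    have hmono : ∀ {C C' : ℕ}, C ≤ C' → S C ⊆ S C' := by
      intro C C' hCC' n hn
      obtain ⟨η, hη1, hη2⟩ := hn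
      exact ⟨η, le_trans hη1 (Nat.mul_le_mul_right _ hCC'), hη2⟩
    have hm_tendsto : Tendsto m (U : Filter ℕ) atTop := by
      rw [tendsto_atTop]
      intro b
      filter_upwards [hT b] with n hn
      have hbν : b ≤ ν n := by
        by_contra hb
        push_neg at hb
        exact hn (hmono hb.le (hSν n))
      exact Nat.le_findGreatest hbν hn
    -- the diagonal γ
    set γ : ℕ → ℕ := fun n => Nat.sqrt (m n) * γ0 n with hγdef
    have hγ_tendsto : Tendsto (fun n => (γ n : ℝ) / (γ0 n : ℝ)) (U : Filter ℕ) atTop := by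
      have : (fun n => (γ n : ℝ) / (γ0 n : ℝ)) = fun n => (Nat.sqrt (m n) : ℝ) := by
        funext n
        have h0 : (0 : ℝ) < (γ0 n : ℝ) := by exact_mod_cast hγ0 n
        field_simp [hγdef]
        simp only [hγdef, Nat.cast_mul]; ring
      rw [this]
      have hsqrt : Tendsto Nat.sqrt atTop atTop := by
        rw [tendsto_atTop]
        intro b
        filter_upwards [eventually_ge_atTop (b * b)] with x hx
        exact Nat.le_sqrt.2 hx
      exact tendsto_natCast_atTop_atTop.comp (hsqrt.comp hm_tendsto)
    obtain ⟨k, ζ, hζsupp, hζU⟩ := h γ hγ_tendsto ε hε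
    -- find a contradictory n
    have hbig : {n : ℕ | k * k + 1 ≤ m n} ∈ U := hm_tendsto (eventually_ge_atTop (k * k + 1))
    obtain ⟨n, hnζ, hnm⟩ := (U.toFilter.nonempty_of_mem (inter_mem hζU hbig))
    have hm_pos : 0 < m n := lt_of_lt_of_le (Nat.succ_pos _) hnm
    have hnT : n ∈ (S (m n))ᶜ := by
      have hpos : 0 < Nat.findGreatest (fun C => n ∈ (S C)ᶜ) (ν n) := hm_pos
      obtain ⟨c, hc0, hcle, hcP⟩ := Nat.findGreatest_pos.1 hpos
      exact Nat.findGreatest_spec (P := fun C => n ∈ (S C)ᶜ) hcle hcP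
    have hk : k ≤ Nat.sqrt (m n) := Nat.le_sqrt.2 (Nat.le_of_succ_le hnm)
    have hle : k * γ n ≤ m n * γ0 n := by
      have h1 : k * Nat.sqrt (m n) ≤ Nat.sqrt (m n) * Nat.sqrt (m n) :=
        Nat.mul_le_mul_right _ hk
      have h2 : Nat.sqrt (m n) * Nat.sqrt (m n) ≤ m n := by
        simpa [pow_two] using Nat.sqrt_le' (m n)
      calc k * γ n = k * Nat.sqrt (m n) * γ0 n := by rw [hγdef]; ring
        _ ≤ m n * γ0 n := Nat.mul_le_mul_right _ (le_trans h1 h2)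
    exact (hnT ⟨ζ n, le_trans (hζsupp n) hle, hnζ⟩).elim
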